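/- Suppose m : (0, r₀] → ℝ is differentiable and satisfies the Riccati inequality m' ≤ -m²/(n-1) - Ric(t), where Ric(t) ≥ (n-1)H - f''(t) for a C² function f on [0, r₀]. Let sn_H solve sn_H''+H·sn_H=0, sn_H(0)=0, sn_H'(0)=1, m_H=(n-1)sn_H'/sn_H, and suppose sn_H²(t)·m(t) → 0 and sn_H²(t)·m_H(t) → (n-1)·0 appropriately as t → 0 (i.e., sn_H²·(m - m_H) → 0 as t → 0). Then for all r ∈ (0, r₀] with sn_H > 0 on (0, r]: sn_H²(r)·m(r) ≤ sn_H²(r)·m_H(r) + ∫₀ʳ sn_H²(t)·f''(t) dt. -/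

import Mathlib

open Real Set Filter

/-- Analytic core of the mean curvature comparison under `Ric_f ≥ (n-1)H`. -/
theorem mean_curvature_comparison_core (H : ℝ) (n : ℕ) (hn : 2 ≤ n) (r₀ : ℝ) (hr₀ : 0 < r₀)
    (sn sn' : ℝ → ℝ)
    (hsn : ∀ x, HasDerivAt sn (sn' x) x)
    (hsn' : ∀ x, HasDerivAt sn' (-(H * sn x)) x)
    (hsn0 : sn 0 = 0) (hsn0' : sn' 0 = 1)
    (m m' : ℝ → ℝ)
    (hm : ∀ t ∈ Ioc (0:ℝ) r₀, HasDerivAt m (m' t) t)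
    (Ric : ℝ → ℝ)
    (hric : ∀ t ∈ Ioc (0:ℝ) r₀, m' t ≤ -(m t) ^ 2 / (n - 1 : ℝ) - Ric t)
    (f f' f'' : ℝ → ℝ)
    (hf : ∀ t ∈ Icc (0:ℝ) r₀, HasDerivAt f (f' t) t)
    (hf' : ∀ t ∈ Icc (0:ℝ) r₀, HasDerivAt f' (f'' t) t)
    (hf''cont : ContinuousOn f'' (Icc (0:ℝ) r₀))
    (hRicLower : ∀ t ∈ Ioc (0:ℝ) r₀, Ric t ≥ (n - 1 : ℝ) * H - f'' t)
    (hbdry : Tendsto (fun t => sn t ^ 2 * (m t - (n - 1 : ℝ) * sn' t / sn t))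
      (nhdsWithin 0 (Ioi 0)) (nhds 0)) :
    ∀ r ∈ Ioc (0:ℝ) r₀, (∀ t ∈ Ioc (0:ℝ) r, sn t > 0) →
      sn r ^ 2 * m r ≤ sn r ^ 2 * ((n - 1 : ℝ) * sn' r / sn r)
        + ∫ t in (0:ℝ)..r, sn t ^ 2 * f'' t := by
  intro r hr hpos
  obtain ⟨hr0, hrr₀⟩ := hr
  have hcpos : (0:ℝ) < (n : ℝ) - 1 := by
    have : (2:ℝ) ≤ (n : ℝ) := by exact_mod_cast hn
    linarith
  have hsncont : Continuous sn := continuous_iff_continuousAt.2 fun x => (hsn x).continuousAt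
  -- the integrand and its primitive
  set φ : ℝ → ℝ := fun t => sn t ^ 2 * f'' t with hφdef
  have hφcont : ContinuousOn φ (Icc 0 r₀) :=
    ((hsncont.pow 2).continuousOn).mul hf''cont
  have hφIntOn : MeasureTheory.IntegrableOn φ (uIcc 0 r₀) := by
    rw [uIcc_of_le hr₀.le]; exact hφcont.integrableOn_Icc
  set I : ℝ → ℝ := fun x => ∫ t in (0:ℝ)..x, φ t with hIdef
  have hIcont : ContinuousOn I (Icc 0 r₀) := by
    have := intervalIntegral.continuousOn_primitive_interval hφIntOn
    rwa [uIcc_of_le hr₀.le] at this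
  have hIderiv : ∀ t ∈ Ioo (0:ℝ) r₀, HasDerivAt I (φ t) t := by
    intro t ht
    have hmem : Icc (0:ℝ) r₀ ∈ nhds t := Icc_mem_nhds ht.1 ht.2
    have hca : ContinuousAt φ t := hφcont.continuousAt hmem
    refine intervalIntegral.integral_hasDerivAt_right
      (hφIntOn.intervalIntegrable.mono_set ?_) ?_ hca
    · rw [uIcc_of_le hr₀.le, uIcc_of_le ht.1.le]
      exact Icc_subset_Icc le_rfl ht.2.le
    · exact ContinuousAt.stronglyMeasurableAtFilter isOpen_Ioo
        (fun x hx => (hφcont.continuousAt (Icc_mem_nhds hx.1 hx.2))) t ht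
  -- the comparison function
  set g : ℝ → ℝ := fun t => sn t ^ 2 * m t - ((n:ℝ) - 1) * (sn t * sn' t) - I t with hgdef
  -- g is antitone on [t₁, r] for any 0 < t₁ < r
  have hgr : ∀ t₁ ∈ Ioo (0:ℝ) r, g r ≤ g t₁ := by
    intro t₁ ht₁
    have hsubIoc : Icc t₁ r ⊆ Ioc (0:ℝ) r₀ := fun x hx =>
      ⟨lt_of_lt_of_le ht₁.1 hx.1, le_trans hx.2 hrr₀⟩
    have hcontg : ContinuousOn g (Icc t₁ r) := by
      refine ContinuousOn.sub (ContinuousOn.sub ?_ ?_) ?_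
      · exact ((hsncont.pow 2).continuousOn).mul
          (fun x hx => ((hm x (hsubIoc hx)).continuousAt).continuousWithinAt)
      · exact continuousOn_const.mul (hsncont.continuousOn.mul
          (fun x hx => ((hsn' x).continuousAt.continuousWithinAt)))
      · exact hIcont.mono (fun x hx => ⟨le_trans ht₁.1.le hx.1, le_trans hx.2 hrr₀⟩)
    have hAnti : AntitoneOn g (Icc t₁ r) := by
      refine antitoneOn_of_hasDerivWithinAt_nonpos (convex_Icc t₁ r) hcontg
        (f' := fun t => (2 * sn t * sn' t * m t + sn t ^ 2 * m' t)
          - ((n:ℝ) - 1) * (sn' t * sn' t + sn t * (-(H * sn t))) - φ t) ?_ ?_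
      · intro x hx
        rw [interior_Icc] at hx
        have hxIoc : x ∈ Ioc (0:ℝ) r₀ := hsubIoc ⟨hx.1.le, hx.2.le⟩
        have h1 : HasDerivAt (fun t => sn t ^ 2 * m t)
            (2 * sn x * sn' x * m x + sn x ^ 2 * m' x) x := by
          have := ((hsn x).pow 2).mul (hm x hxIoc)
          exact this.congr_deriv (by norm_num)
        have h2 : HasDerivAt (fun t => ((n:ℝ) - 1) * (sn t * sn' t))
            (((n:ℝ) - 1) * (sn' x * sn' x + sn x * (-(H * sn x)))) x :=
          ((hsn x).mul (hsn' x)).const_mul _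
        have h3 : HasDerivAt I (φ x) x :=
          hIderiv x ⟨hxIoc.1, lt_of_lt_of_le hx.2 hrr₀⟩
        exact ((h1.sub h2).sub h3).hasDerivWithinAt
      · intro x hx
        rw [interior_Icc] at hx
        have hxIoc : x ∈ Ioc (0:ℝ) r₀ := hsubIoc ⟨hx.1.le, hx.2.le⟩
        have hb1 := hric x hxIoc
        have hb2 := hRicLower x hxIoc
        have hm' : m' x ≤ -(m x) ^ 2 / ((n:ℝ) - 1) - ((n:ℝ) - 1) * H + f'' x := by
          linarith
        have hsq : sn x ^ 2 * m' x ≤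
            sn x ^ 2 * (-(m x) ^ 2 / ((n:ℝ) - 1) - ((n:ℝ) - 1) * H + f'' x) :=
          mul_le_mul_of_nonneg_left hm' (sq_nonneg _)
        have key : 2 * sn x * sn' x * m x + sn x ^ 2 * (-(m x) ^ 2 / ((n:ℝ) - 1))
            - ((n:ℝ) - 1) * (sn' x * sn' x) ≤ 0 := by
          have heq : 2 * sn x * sn' x * m x + sn x ^ 2 * (-(m x) ^ 2 / ((n:ℝ) - 1))
              - ((n:ℝ) - 1) * (sn' x * sn' x)
              = -((sn x * m x - ((n:ℝ) - 1) * sn' x) ^ 2 / ((n:ℝ) - 1)) := by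
            field_simp
            ring
          rw [heq]
          exact neg_nonpos.2 (div_nonneg (sq_nonneg _) hcpos.le)
        show 2 * sn x * sn' x * m x + sn x ^ 2 * m' x
          - ((n:ℝ) - 1) * (sn' x * sn' x + sn x * (-(H * sn x))) - sn x ^ 2 * f'' x ≤ 0
        nlinarith [key, hsq]
    exact hAnti (left_mem_Icc.2 ht₁.2.le) (right_mem_Icc.2 ht₁.2.le) ht₁.2.le
  -- limit of g at 0⁺ along Ioo 0 r is 0
  have hsub : Ioo (0:ℝ) r ⊆ Ioi 0 := fun x hx => hx.1
  have hb' : Tendsto (fun t => sn t ^ 2 * (m t - ((n:ℝ) - 1) * sn' t / sn t))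
      (nhdsWithin 0 (Ioo 0 r)) (nhds 0) :=
    hbdry.mono_left (nhdsWithin_mono _ hsub)
  have hI0 : Tendsto I (nhdsWithin 0 (Ioo 0 r)) (nhds 0) := by
    have h0 : (0:ℝ) ∈ Icc (0:ℝ) r₀ := ⟨le_rfl, hr₀.le⟩
    have := (hIcont 0 h0).mono_left
      (nhdsWithin_mono _ (Ioo_subset_Icc_self.trans (Icc_subset_Icc le_rfl hrr₀)))
    simpa [hIdef, intervalIntegral.integral_same] using this
  have hg0 : Tendsto g (nhdsWithin 0 (Ioo 0 r)) (nhds 0) := by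
    have h := hb'.sub hI0
    rw [sub_zero] at h
    refine h.congr' ?_
    filter_upwards [self_mem_nhdsWithin] with t ht
    have hsnt : sn t ≠ 0 := (hpos t ⟨ht.1, ht.2.le⟩).ne'
    simp only [hgdef]
    field_simp
  -- conclude
  haveI : (nhdsWithin (0:ℝ) (Ioo 0 r)).NeBot := left_nhdsWithin_Ioo_neBot hr0
  have hgle : g r ≤ 0 := by
    refine ge_of_tendsto hg0 ?_
    filter_upwards [self_mem_nhdsWithin] with t ht
    exact hgr t ht
  have hsnr : sn r ≠ 0 := (hpos r ⟨hr0, le_rfl⟩).ne'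
  have hrw : sn r ^ 2 * (((n:ℝ) - 1) * sn' r / sn r) = ((n:ℝ) - 1) * (sn r * sn' r) := by
    field_simp
  have : sn r ^ 2 * m r - ((n:ℝ) - 1) * (sn r * sn' r) - I r ≤ 0 := hgle
  rw [hrw]
  linarith
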